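/- Let G be a directed graph on n vertices whose edge i→j is labeled b_{ji} (labels in a commutative ring), and let L be its Laplacian matrix. Write det(λI − L) = λ^n + e_{n−1}λ^{n−1} + ⋯ + e_0. Then for each i = 0, 1, …, n−1, e_i = (−1)^{n−i} Σ_{F ∈ 𝓕_{n−i}(G)} π_F, the sum being over all spanning incoming forests of G with exactly n−i edges. In particular, e_0 = 0. -/

import Mathlib

open scoped Classical



/-- Pigeonhole cycle extraction. -/
lemma exists_iterate_cycle {V : Type*} [DecidableEq V] (f : V → V) (T : Finset V)
    (hne : T.Nonempty) (hcl : ∀ t ∈ T, f t ∈ T) :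
    ∃ (t0 : V) (a b : ℕ), a < b ∧ (∀ m, f^[m] t0 ∈ T) ∧ f^[b] t0 = f^[a] t0 ∧
      Set.InjOn (fun m => f^[m] t0) (Set.Ico a b) := by
  obtain ⟨t0, ht0⟩ := hne
  have hg : ∀ m, f^[m] t0 ∈ T := by
    intro m
    induction m with
    | zero => simpa
    | succ k ih => rw [Function.iterate_succ_apply']; exact hcl _ ih
  have hrep : ∃ x ∈ Finset.range (T.card + 1), ∃ y ∈ Finset.range (T.card + 1),
      x ≠ y ∧ f^[x] t0 = f^[y] t0 := by
    exact Finset.exists_ne_map_eq_of_card_lt_of_maps_to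
      (by simp) (fun x _ => hg x)
  have hP : ∃ b : ℕ, ∃ a, a < b ∧ f^[b] t0 = f^[a] t0 := by
    obtain ⟨x, -, y, -, hxy, he⟩ := hrep
    rcases lt_or_gt_of_ne hxy with h | h
    · exact ⟨y, x, h, he.symm⟩
    · exact ⟨x, y, h, he⟩
  classical
  set b := Nat.find hP with hb
  obtain ⟨a, hab, hba⟩ := Nat.find_spec hP
  refine ⟨t0, a, b, hab, hg, hba, ?_⟩
  intro x hx y hy hxy
  by_contra hne'
  rcases lt_or_gt_of_ne hne' with h | h
  · exact absurd ⟨x, h, hxy.symm⟩ (Nat.find_min hP hy.2)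
  · exact absurd ⟨y, h, hxy⟩ (Nat.find_min hP hx.2)

section
variable {V : Type*} [Fintype V] [DecidableEq V] {A : Type*} [CommRing A]

noncomputable def zMat (S : Finset V) (f : V → V) : Matrix V V A :=
  Matrix.of fun i j => (if i = j then (1 : A) else 0) - (if i ∈ S ∧ f i = j then 1 else 0)

lemma det_zMat (S : Finset V) (f : V → V) (hf : ∀ i ∈ S, f i ≠ i) :
    (zMat S f : Matrix V V A).det
      = if (∀ T ⊆ S, T.Nonempty → ∃ i ∈ T, f i ∉ T) then 1 else 0 := by
  induction S using Finset.strongInduction with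
  | _ S ih =>
  by_cases hNC : ∀ T ⊆ S, T.Nonempty → ∃ i ∈ T, f i ∉ T
  · rw [if_pos hNC]
    rcases S.eq_empty_or_nonempty with rfl | hSne
    · have : (zMat ∅ f : Matrix V V A) = 1 := by
        ext i j
        simp [zMat, Matrix.one_apply]
      rw [this, Matrix.det_one]
    · obtain ⟨i, hiS, hfiS⟩ := hNC S le_rfl hSne
      have hne : i ≠ f i := (hf i hiS).symm
      have key := Matrix.det_updateRow_add_self (zMat S f : Matrix V V A) hne
      have hupd : (zMat S f : Matrix V V A).updateRow i
          ((zMat S f : Matrix V V A) i + (zMat S f : Matrix V V A) (f i))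
          = (zMat (S.erase i) f : Matrix V V A) := by
        ext a b
        by_cases hai : a = i
        · subst hai
          simp only [Matrix.updateRow_self, zMat, Matrix.of_apply, Pi.add_apply]
          have h1 : (a ∈ S ∧ f a = b) ↔ f a = b := and_iff_right hiS
          have h2 : ¬(f a ∈ S ∧ f (f a) = b) := fun h => hfiS h.1
          have h3 : ¬(a ∈ S.erase a ∧ f a = b) := fun h => Finset.notMem_erase a S h.1
          rw [if_neg h2, if_neg h3, if_congr h1 rfl rfl]
          ring
        · rw [Matrix.updateRow_ne hai]
          simp only [zMat, Matrix.of_apply]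
          congr 1
          have : a ∈ S.erase i ↔ a ∈ S := by simp [Finset.mem_erase, hai]
          simp [this]
      have hcond : ∀ T ⊆ S.erase i, T.Nonempty → ∃ j ∈ T, f j ∉ T := fun T hT hTne =>
        hNC T (hT.trans (Finset.erase_subset _ _)) hTne
      have hih := ih (S.erase i) (Finset.erase_ssubset hiS)
        (fun j hj => hf j (Finset.mem_of_mem_erase hj))
      rw [← key, hupd, hih, if_pos hcond]
  · rw [if_neg hNC]
    push_neg at hNC
    obtain ⟨T, hTS, hTne, hcl⟩ := hNC
    obtain ⟨t0, a, b, hab, hgT, hcyc, hinj⟩ := exists_iterate_cycle f T hTne hcl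
    set g : ℕ → V := fun m => f^[m] t0 with hgdef
    have hb0 : 0 < b := lt_of_le_of_lt (Nat.zero_le a) hab
    set C : Finset V := (Finset.Ico a b).image g with hC
    have hCS : ∀ t ∈ C, t ∈ S := by
      intro t ht
      obtain ⟨m, -, rfl⟩ := Finset.mem_image.mp ht
      exact hTS (hgT m)
    have hstep : ∀ m, f (g m) = g (m + 1) := by
      intro m
      show f (f^[m] t0) = f^[m+1] t0
      rw [Function.iterate_succ_apply']
    have himg : C.image f = C := by
      apply Finset.Subset.antisymm
      · intro u hu
        obtain ⟨t, ht, rfl⟩ := Finset.mem_image.mp hu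
        obtain ⟨m, hm, rfl⟩ := Finset.mem_image.mp ht
        simp only [Finset.mem_Ico] at hm
        rw [hstep]
        rcases eq_or_lt_of_le (Nat.succ_le_of_lt hm.2) with hb' | hb'
        · refine Finset.mem_image.mpr ⟨a, Finset.mem_Ico.mpr ⟨le_rfl, hab⟩, ?_⟩
          show g a = g (m+1)
          rw [show m + 1 = b from hb']
          exact hcyc.symm
        · exact Finset.mem_image.mpr ⟨m + 1,
            Finset.mem_Ico.mpr ⟨le_trans hm.1 (Nat.le_succ m), hb'⟩, rfl⟩
      · intro u hu
        obtain ⟨m, hm, rfl⟩ := Finset.mem_image.mp hu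
        simp only [Finset.mem_Ico] at hm
        rcases eq_or_lt_of_le hm.1 with heq | hma
        · refine Finset.mem_image.mpr ⟨g (b - 1), Finset.mem_image.mpr ⟨b - 1,
            Finset.mem_Ico.mpr ⟨heq ▸ Nat.le_sub_one_of_lt hm.2, Nat.sub_lt hb0 one_pos⟩, rfl⟩, ?_⟩
          rw [hstep, show b - 1 + 1 = b from Nat.succ_pred_eq_of_pos hb0, ← heq]
          exact hcyc
        · refine Finset.mem_image.mpr ⟨g (m - 1), Finset.mem_image.mpr ⟨m - 1,
            Finset.mem_Ico.mpr ⟨Nat.le_sub_one_of_lt hma,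
              lt_trans (Nat.sub_lt (lt_of_le_of_lt (Nat.zero_le a) hma) one_pos) hm.2⟩, rfl⟩, ?_⟩
          rw [hstep, show m - 1 + 1 = m from
            Nat.succ_pred_eq_of_pos (lt_of_le_of_lt (Nat.zero_le a) hma)]
    have hfinj : Set.InjOn f (C : Set V) := Finset.card_image_iff.mp (by rw [himg])
    have hrowsum : ∑ t ∈ C, (zMat S f : Matrix V V A) t = 0 := by
      funext j
      rw [Finset.sum_apply (g := fun t => (zMat S f : Matrix V V A) t)]
      simp only [zMat, Matrix.of_apply, Pi.zero_apply]
      rw [Finset.sum_sub_distrib]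
      rw [Finset.sum_congr rfl (fun t ht =>
        (if_congr (and_iff_right (hCS t ht)) rfl rfl :
          (if t ∈ S ∧ f t = j then (1:A) else 0) = if f t = j then 1 else 0))]
      have h2 : ∑ u ∈ C.image f, (if u = j then (1:A) else 0)
          = ∑ t ∈ C, (if f t = j then (1:A) else 0) :=
        Finset.sum_image (f := fun u => if u = j then (1:A) else 0) (g := f)
          (fun x hx y hy h => hfinj hx hy h)
      rw [← h2, himg, sub_self]
    have ht1 : g a ∈ C := Finset.mem_image.mpr ⟨a, Finset.mem_Ico.mpr ⟨le_rfl, hab⟩, rfl⟩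
    set t1 := g a
    have h0 : (zMat S f : Matrix V V A) t1 + ∑ t ∈ C.erase t1, (zMat S f : Matrix V V A) t = 0 := by
      rw [Finset.add_sum_erase C (fun t => (zMat S f : Matrix V V A) t) ht1, hrowsum]
    have hsplit : (zMat S f : Matrix V V A) t1
        = (0:A) • (zMat S f : Matrix V V A) t1
          + ∑ t ∈ C.erase t1, (-1:A) • (zMat S f : Matrix V V A) t := by
      rw [eq_neg_of_add_eq_zero_left h0]
      simp [neg_smul]
      exact (Finset.sum_neg_distrib (f := fun t => (zMat S f : Matrix V V A) t)).symm
    have hdet := Matrix.det_updateRow_sum_aux (zMat S f : Matrix V V A)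
      (C.erase t1) (Finset.notMem_erase t1 C) (fun _ => (-1:A)) 0
    rw [← hsplit, Matrix.updateRow_eq_self] at hdet
    simpa using hdet
end

lemma exists_walk_of_chain {V : Type*} (G : SimpleGraph V) :
    ∀ (l : List V) (a b : V), List.Chain G.Adj a (l ++ [b]) →
      ∃ p : G.Walk a b, p.support = a :: (l ++ [b])
  | [], a, b, h => by
    rw [List.nil_append, List.Chain, List.isChain_cons_cons] at h
    exact ⟨SimpleGraph.Walk.cons h.1 SimpleGraph.Walk.nil, by simp⟩
  | c :: l, a, b, h => by
    rw [List.cons_append, List.Chain, List.isChain_cons_cons] at h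
    obtain ⟨p, hp⟩ := exists_walk_of_chain G l c b h.2
    exact ⟨SimpleGraph.Walk.cons h.1 p, by simp [hp]⟩


/-- An *incoming forest*: a finite set of directed edges such that the underlying
undirected graph has no cycles and each vertex has at most one outgoing edge. -/
def IsIncomingForest {V : Type*} (F : Finset (V × V)) : Prop :=
  (∀ e ∈ F, e.1 ≠ e.2) ∧
  (∀ e ∈ F, (e.2, e.1) ∉ F) ∧
  (SimpleGraph.fromRel fun u v => (u, v) ∈ F).IsAcyclic ∧
  (∀ e ∈ F, ∀ e' ∈ F, e.1 = e'.1 → e = e')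

/-- Sum over all spanning incoming forests with exactly `k` edges contained in `E`
of the products of the edge labels. -/
noncomputable def forestSum {V R : Type*} [DecidableEq V] [CommRing R]
    (E : Finset (V × V)) (w : V × V → R) (k : ℕ) : R :=
  ∑ F ∈ E.powerset.filter (fun F => F.card = k ∧ IsIncomingForest F), ∏ e ∈ F, w e

/-- The Laplacian matrix of a labelled directed graph with edge set `E` and labels `w`
(the label of the edge `i → j` is `b_{ji} = w (i, j)`): the `(i,j)` off-diagonal entry is
`-b_{ji}` and the `(i,i)` diagonal entry is the sum of the labels of the edges leaving `i`. -/
noncomputable def digraphLaplacian {V R : Type*} [Fintype V] [DecidableEq V] [CommRing R]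
    (E : Finset (V × V)) (w : V × V → R) : Matrix V V R :=
  Matrix.of fun i j =>
    if i = j then ∑ e ∈ E.filter (fun e => e.1 = i ∧ e.2 ≠ i), w e
    else -(if (i, j) ∈ E then w (i, j) else 0)

/-- Buslov. Writing `det (λ I - L) = λ^n + e_{n-1} λ^{n-1} + ⋯ + e_0`
for the Laplacian `L` of a directed graph `G` on `n` vertices, one has
`e_i = (-1)^{n-i} Σ_{F ∈ 𝓕_{n-i}(G)} π_F` for each `i < n`; in particular `e_0 = 0`. -/
lemma noCyc_iff_forest {V : Type*} [DecidableEq V] (F : Finset (V × V)) (S : Finset V)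
    (f : V → V)
    (h1 : ∀ e ∈ F, e.1 ∈ S ∧ f e.1 = e.2 ∧ e.1 ≠ e.2)
    (h2 : ∀ i ∈ S, (i, f i) ∈ F) :
    (∀ T ⊆ S, T.Nonempty → ∃ i ∈ T, f i ∉ T) ↔ IsIncomingForest F := by
  constructor
  · intro hNC
    have hout : ∀ e ∈ F, ∀ e' ∈ F, e.1 = e'.1 → e = e' := by
      intro e he e' he' h
      exact Prod.ext h (by rw [← (h1 e he).2.1, ← (h1 e' he').2.1, h])
    have h2cyc : ∀ e ∈ F, (e.2, e.1) ∉ F := by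
      intro e he hrev
      have he1S := (h1 e he).1
      have he2S : e.2 ∈ S := (h1 _ hrev).1
      have hfe1 : f e.1 = e.2 := (h1 e he).2.1
      have hfe2 : f e.2 = e.1 := (h1 _ hrev).2.1
      obtain ⟨i, hi, hfi⟩ := hNC {e.1, e.2}
        (by
          intro x hx
          rcases Finset.mem_insert.mp hx with rfl | hx
          · exact he1S
          · rw [Finset.mem_singleton.mp hx]; exact he2S)
        ⟨e.1, by simp⟩
      rcases Finset.mem_insert.mp hi with rfl | hi
      · exact hfi (by rw [hfe1]; simp)
      · rw [Finset.mem_singleton.mp hi] at hfi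
        exact hfi (by rw [hfe2]; simp)
    refine ⟨fun e he => (h1 e he).2.2, h2cyc, ?_, hout⟩
    intro v c hc
    set T : Finset V := c.support.tail.toFinset with hT
    have hlen3 := hc.three_le_length
    have hnodupT : c.support.tail.Nodup := hc.support_nodup
    have hTcard : T.card = c.length := by
      rw [hT, List.toFinset_card_of_nodup hnodupT, List.length_tail,
        SimpleGraph.Walk.length_support]
      simp
    have hmemT : ∀ x, x ∈ c.support → x ∈ T := by
      intro x hx
      rw [hT, List.mem_toFinset]
      cases c with
      | nil => exact absurd rfl hc.ne_nil
      | cons hadj q =>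
        rw [SimpleGraph.Walk.support_cons] at hx
        simp only [SimpleGraph.Walk.support_cons, List.tail_cons]
        rcases List.mem_cons.mp hx with rfl | hx
        · exact q.end_mem_support
        · exact hx
    set D : Finset (V × V) := F.filter (fun e => s(e.1, e.2) ∈ c.edges) with hD
    have hsurj : ∀ ε ∈ c.edges, ∃ e ∈ D, s(e.1, e.2) = ε := by
      intro ε hε
      have hεE := c.edges_subset_edgeSet hε
      induction ε using Sym2.ind with
      | _ u v' =>
        have hadj : (SimpleGraph.fromRel fun u v => (u, v) ∈ F).Adj u v' := hεE
        rw [SimpleGraph.fromRel_adj] at hadj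
        rcases hadj.2 with h | h
        · exact ⟨(u, v'), Finset.mem_filter.mpr ⟨h, hε⟩, rfl⟩
        · exact ⟨(v', u), Finset.mem_filter.mpr ⟨h, by rwa [Sym2.eq_swap]⟩, Sym2.eq_swap⟩
    have hDinj : ∀ e ∈ D, ∀ e' ∈ D, s(e.1, e.2) = s(e'.1, e'.2) → e = e' := by
      intro e he e' he' h
      have heF := (Finset.mem_filter.mp he).1
      have heF' := (Finset.mem_filter.mp he').1
      rcases Sym2.eq_iff.mp h with ⟨h1', h2'⟩ | ⟨h1', h2'⟩
      · exact Prod.ext h1' h2'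
      · exact absurd (show (e'.2, e'.1) ∈ F by
          rw [← h1', ← h2']; exact heF) (h2cyc e' heF')
    have hDcard : D.card = c.length := by
      have h1' : D.card = c.edges.toFinset.card := by
        apply Finset.card_bij (fun e _ => s(e.1, e.2))
        · intro e he; rw [List.mem_toFinset]; exact (Finset.mem_filter.mp he).2
        · intro e he e' he' h; exact hDinj e he e' he' h
        · intro ε hε
          obtain ⟨e, he, hee⟩ := hsurj ε (List.mem_toFinset.mp hε)
          exact ⟨e, he, hee⟩
      rw [h1', List.toFinset_card_of_nodup hc.edges_nodup, SimpleGraph.Walk.length_edges]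
    have hsrcT : ∀ e ∈ D, e.1 ∈ T := fun e he =>
      hmemT _ (c.fst_mem_support_of_mem_edges (Finset.mem_filter.mp he).2)
    have hsurjT : ∀ t ∈ T, ∃ e, ∃ _ : e ∈ D, t = e.1 :=
      Finset.surj_on_of_inj_on_of_card_le (fun e _ => e.1) hsrcT
        (fun e e' he he' h =>
          hout e (Finset.mem_filter.mp he).1 e' (Finset.mem_filter.mp he').1 h)
        (by rw [hDcard, hTcard])
    have hTS' : T ⊆ S := by
      intro t ht
      obtain ⟨e, he, rfl⟩ := hsurjT t ht
      exact (h1 e (Finset.mem_filter.mp he).1).1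
    have hTne : T.Nonempty := Finset.card_pos.mp (by rw [hTcard]; omega)
    obtain ⟨i, hiT, hfiT⟩ := hNC T hTS' hTne
    obtain ⟨e, he, rfl⟩ := hsurjT i hiT
    apply hfiT
    rw [(h1 e (Finset.mem_filter.mp he).1).2.1]
    exact hmemT _ (c.snd_mem_support_of_mem_edges (Finset.mem_filter.mp he).2)
  · rintro ⟨hne, h2cyc, hacyc, -⟩ T hTS hTne
    by_contra hcon
    push_neg at hcon
    obtain ⟨t0, a, b, hab, hgT, hcyc, hinj⟩ := exists_iterate_cycle f T hTne hcon
    set g : ℕ → V := fun m => f^[m] t0 with hgdef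
    have hcyc' : g b = g a := hcyc
    have hstep : ∀ m, f (g m) = g (m + 1) := fun m =>
      (Function.iterate_succ_apply' f m t0).symm
    have hgS : ∀ m, g m ∈ S := fun m => hTS (hgT m)
    have hgF : ∀ m, (g m, g (m + 1)) ∈ F := fun m => by
      have := h2 (g m) (hgS m)
      rwa [hstep m] at this
    set G := SimpleGraph.fromRel (fun u v => (u, v) ∈ F) with hGdef
    have hne' : ∀ x y, x ∈ Set.Ico a b → y ∈ Set.Ico a b → x ≠ y → g x ≠ g y :=
      fun x y hx hy hxy h => hxy (hinj hx hy h)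
    rcases (show b = a + 1 ∨ b = a + 2 ∨ a + 3 ≤ b by omega) with hb | hb | hb
    · apply hne (g a, g (a + 1)) (hgF a)
      show g a = g (a + 1)
      rw [show a + 1 = b from hb.symm]
      exact hcyc.symm
    · apply h2cyc (g a, g (a + 1)) (hgF a)
      have h2' := hgF (a + 1)
      have hgab : g (a + 1 + 1) = g a := by
        rw [show a + 1 + 1 = b by omega]; exact hcyc'
      show (g (a+1), g a) ∈ F
      rw [← hgab]
      exact h2'
    · have hadj' : ∀ m, a ≤ m → m + 1 < b → G.Adj (g m) (g (m + 1)) := by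
        intro m hm hmb
        rw [hGdef, SimpleGraph.fromRel_adj]
        exact ⟨hne' m (m + 1) ⟨hm, by omega⟩ ⟨by omega, hmb⟩ (by omega), Or.inl (hgF m)⟩
      have hq : ∀ j, a + 1 ≤ j → j ≤ b - 1 →
          ∃ q : G.Walk (g (a + 1)) (g j), q.support = (List.Ico (a + 1) (j + 1)).map g := by
        intro j hj1 hj2
        induction j, hj1 using Nat.le_induction with
        | base =>
          exact ⟨SimpleGraph.Walk.nil, by simp [List.Ico.succ_singleton]⟩
        | succ j hj ih =>
          obtain ⟨q, hqsup⟩ := ih (by omega)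
          have hadj : G.Adj (g j) (g (j + 1)) := hadj' j (by omega) (by omega)
          refine ⟨q.concat hadj, ?_⟩
          rw [SimpleGraph.Walk.support_concat, hqsup,
            List.Ico.succ_top (show a + 1 ≤ j + 1 by omega), List.map_append]
          simp
      obtain ⟨q, hqsup⟩ := hq (b - 1) (by omega) le_rfl
      have hadj0 : G.Adj (g a) (g (b - 1)) := by
        rw [hGdef, SimpleGraph.fromRel_adj]
        refine ⟨hne' a (b - 1) ⟨le_rfl, by omega⟩ ⟨by omega, by omega⟩ (by omega), Or.inr ?_⟩
        have := hgF (b - 1)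
        rwa [show b - 1 + 1 = b by omega, hcyc'] at this
      set p2 : G.Walk (g a) (g (a + 1)) := SimpleGraph.Walk.cons hadj0 q.reverse with hp2
      have hadj1 : G.Adj (g a) (g (a + 1)) := hadj' a le_rfl (by omega)
      set p1 : G.Walk (g a) (g (a + 1)) :=
        SimpleGraph.Walk.cons hadj1 SimpleGraph.Walk.nil with hp1
      have hp2sup : p2.support = g a :: (((List.Ico (a + 1) b).map g).reverse) := by
        rw [hp2, SimpleGraph.Walk.support_cons, SimpleGraph.Walk.support_reverse, hqsup,
          show b - 1 + 1 = b by omega]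
      have hIcomem : ∀ x ∈ List.Ico (a + 1) b, x ∈ Set.Ico a b := by
        intro x hx
        rw [List.Ico.mem] at hx
        exact ⟨by omega, hx.2⟩
      have hp2path : p2.IsPath := by
        rw [SimpleGraph.Walk.isPath_def, hp2sup, List.nodup_cons]
        constructor
        · intro hmem
          rw [List.mem_reverse, List.mem_map] at hmem
          obtain ⟨x, hx, hgx⟩ := hmem
          exact hne' x a (hIcomem x hx) ⟨le_rfl, by omega⟩
            (by rw [List.Ico.mem] at hx; omega) hgx
        · rw [List.nodup_reverse]
          exact List.Nodup.map_on
            (fun x hx y hy hxy => hinj (hIcomem x hx) (hIcomem y hy) hxy)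
            (List.Ico.nodup _ _)
      have hp1path : p1.IsPath := by
        rw [SimpleGraph.Walk.isPath_def]
        simp [hp1, hne' a (a + 1) ⟨le_rfl, by omega⟩ ⟨by omega, by omega⟩ (by omega)]
      have heqp : (⟨p1, hp1path⟩ : G.Path (g a) (g (a + 1))) = ⟨p2, hp2path⟩ :=
        hacyc.path_unique _ _
      have hL1 : p1.support.length = 2 := by
        rw [hp1, SimpleGraph.Walk.support_cons, SimpleGraph.Walk.support_nil]
        rfl
      have hL2 : p2.support.length = 1 + (b - (a + 1)) := by
        rw [hp2sup]
        simp only [List.length_cons, List.length_reverse, List.length_map, List.Ico.length]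
        omega
      have hpp : p1 = p2 := congrArg Subtype.val heqp
      rw [hpp, hL2] at hL1
      omega

theorem laplacian_charpoly_coeff {R : Type*} [CommRing R] {n : ℕ}
    (E : Finset (Fin n × Fin n)) (w : Fin n × Fin n → R)
    (hE : ∀ e ∈ E, e.1 ≠ e.2) :
    (∀ i < n, (digraphLaplacian E w).charpoly.coeff i
        = (-1 : R) ^ (n - i) * forestSum E w (n - i)) ∧
      (0 < n → (digraphLaplacian E w).charpoly.coeff 0 = 0) := by
  classical
  set L := digraphLaplacian E w with hLdef
  set Ai : Fin n → Finset (Option (Fin n × Fin n)) :=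
    fun i => insert none ((E.filter fun e => e.1 = i).image some) with hAi
  set cc : Fin n → Option (Fin n × Fin n) → Polynomial R :=
    fun _i o => o.elim Polynomial.X (fun e => -(Polynomial.C (w e))) with hcc
  set vv : Fin n → Option (Fin n × Fin n) → (Fin n → Polynomial R) :=
    fun i o => o.elim (Pi.single i 1) (fun e => Pi.single i 1 - Pi.single e.2 1) with hvv
  set Sr : ((i : Fin n) → Option (Fin n × Fin n)) → Finset (Fin n) :=
    fun r => Finset.univ.filter (fun i => ¬ (r i = none)) with hSr
  set er : ((i : Fin n) → Option (Fin n × Fin n)) → Fin n → Fin n × Fin n :=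
    fun r i => (r i).getD (i, i) with her
  set fr : ((i : Fin n) → Option (Fin n × Fin n)) → Fin n → Fin n :=
    fun r i => (er r i).2 with hfr
  -- basic membership facts
  have hmem : ∀ r ∈ Fintype.piFinset Ai, ∀ i, ¬(r i = none) →
      ∃ e, e ∈ E ∧ e.1 = i ∧ r i = some e := by
    intro r hr i hni
    have hri : r i ∈ Ai i := Fintype.mem_piFinset.mp hr i
    rcases Finset.mem_insert.mp hri with h | h
    · exact absurd h hni
    · obtain ⟨e, he, hee⟩ := Finset.mem_image.mp h
      obtain ⟨heE, he1⟩ := Finset.mem_filter.mp he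
      exact ⟨e, heE, he1, hee.symm⟩
  -- the row decomposition
  have hrow : ∀ i, (Matrix.charmatrix L) i = fun j => ∑ o ∈ Ai i, (cc i o • vv i o) j := by
    intro i
    funext j
    have hnotmem : (none : Option (Fin n × Fin n)) ∉ (E.filter fun e => e.1 = i).image some := by
      simp
    rw [Finset.sum_insert hnotmem]
    rw [Finset.sum_image (by intro x _ y _ h; exact Option.some_injective _ h)]
    by_cases hij : i = j
    · subst hij
      rw [Matrix.charmatrix_apply_eq]
      have hfE : E.filter (fun e => e.1 = i ∧ e.2 ≠ i) = E.filter (fun e => e.1 = i) := by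
        apply Finset.filter_congr
        intro e he
        constructor
        · exact fun h => h.1
        · intro h
          refine ⟨h, ?_⟩
          rw [← h]; exact (hE e he).symm
      have hLii : L i i = ∑ e ∈ E.filter (fun e => e.1 = i), w e := by
        rw [hLdef]
        show (if i = i then ∑ e ∈ E.filter (fun e => e.1 = i ∧ e.2 ≠ i), w e
          else -(if (i, i) ∈ E then w (i, i) else 0)) = _
        rw [if_pos rfl, hfE]
      rw [hLii, map_sum]
      have h1 : (cc i none • vv i none) i = Polynomial.X := by
        simp [hcc, hvv, Pi.single_apply]
      have h2 : ∀ e ∈ E.filter (fun e => e.1 = i),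
          (cc i (some e) • vv i (some e)) i = -Polynomial.C (w e) := by
        intro e he
        have hne2 : i ≠ e.2 := by
          have := hE e (Finset.mem_filter.mp he).1
          rw [(Finset.mem_filter.mp he).2] at this
          exact this
        simp only [hcc, hvv, Option.elim, Pi.smul_apply, Pi.sub_apply, Pi.single_apply,
          smul_eq_mul]
        rw [if_neg hne2]
        simp
      rw [Finset.sum_congr rfl h2, h1, Finset.sum_neg_distrib]
      ring
    · rw [Matrix.charmatrix_apply_ne _ _ _ hij]
      have hLij : L i j = -(if (i, j) ∈ E then w (i, j) else 0) := by
        rw [hLdef]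
        show (if i = j then _ else -(if (i, j) ∈ E then w (i, j) else 0)) = _
        rw [if_neg hij]
      rw [hLij]
      have h1 : (cc i none • vv i none) j = 0 := by
        simp only [hcc, hvv, Option.elim, Pi.smul_apply, Pi.single_apply, smul_eq_mul]
        rw [if_neg (show ¬ j = i from fun h => hij h.symm), mul_zero]
      have hterm : ∀ e ∈ E.filter (fun e => e.1 = i),
          (cc i (some e) • vv i (some e)) j = if e = (i, j) then Polynomial.C (w e) else 0 := by
        intro e he
        simp only [hcc, hvv, Option.elim, Pi.smul_apply, Pi.sub_apply, Pi.single_apply,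
          smul_eq_mul]
        rw [if_neg (show ¬ j = i from fun h => hij h.symm)]
        by_cases h2 : j = e.2
        · rw [if_pos h2, if_pos (Prod.ext (Finset.mem_filter.mp he).2 h2.symm)]
          ring
        · rw [if_neg h2, if_neg (fun h => h2 (by rw [h]))]
          ring
      rw [Finset.sum_congr rfl hterm, h1, zero_add, Finset.sum_filter]
      have hconv : ∀ e ∈ E, (if e.1 = i then if e = (i, j) then Polynomial.C (w e) else 0 else 0)
          = if (i, j) = e then Polynomial.C (w e) else 0 := by
        intro e _
        by_cases h : e = (i, j)
        · subst h; simp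
        · have hr : (if (i, j) = e then Polynomial.C (w e) else 0) = 0 :=
            if_neg (fun hh => h hh.symm)
          rw [hr]
          by_cases h1' : e.1 = i
          · rw [if_pos h1', if_neg h]
          · rw [if_neg h1']
      rw [Finset.sum_congr rfl hconv, Finset.sum_ite_eq]
      by_cases hmemE : (i, j) ∈ E
      · rw [if_pos hmemE, if_pos hmemE, map_neg, neg_neg]
      · rw [if_neg hmemE, if_neg hmemE, neg_zero, map_zero, neg_zero]
  -- expand the determinant
  have hdet0 : L.charpoly = ∑ r ∈ Fintype.piFinset Ai,
      Matrix.detRowAlternating (Matrix.of fun i => cc i (r i) • vv i (r i)) := by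
    show (Matrix.charmatrix L).det = _
    have : (Matrix.charmatrix L) = Matrix.of fun i => ∑ o ∈ Ai i, cc i o • vv i o := by
      ext i j
      rw [congrFun (hrow i) j]
      simp
    rw [this]
    exact MultilinearMap.map_sum_finset
      (f := (Matrix.detRowAlternating (R := Polynomial R) (n := Fin n)).toMultilinearMap)
      (g := fun i o => cc i o • vv i o) (A := Ai)
  set NC : ((i : Fin n) → Option (Fin n × Fin n)) → Prop :=
    fun r => ∀ T ⊆ Sr r, T.Nonempty → ∃ i ∈ T, fr r i ∉ T with hNCdef
  have hterm : ∀ r ∈ Fintype.piFinset Ai,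
      Matrix.detRowAlternating (Matrix.of fun i => cc i (r i) • vv i (r i))
        = Polynomial.C (if NC r
              then (-1 : R) ^ (Sr r).card * ∏ x ∈ Sr r, w (er r x) else 0)
          * Polynomial.X ^ (n - (Sr r).card) := by
    intro r hr
    have hsmul : Matrix.detRowAlternating (Matrix.of fun i => cc i (r i) • vv i (r i))
        = (∏ i, cc i (r i)) • Matrix.detRowAlternating (Matrix.of fun i => vv i (r i)) :=
      MultilinearMap.map_smul_univ
        (Matrix.detRowAlternating (R := Polynomial R) (n := Fin n)).toMultilinearMap
        (fun i => cc i (r i)) (fun i => vv i (r i))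
    have hz : (Matrix.of fun i => vv i (r i))
        = (zMat (Sr r) (fr r) : Matrix (Fin n) (Fin n) (Polynomial R)) := by
      funext i j
      by_cases hni : r i = none
      · have hiS : i ∉ Sr r := by simp [hSr, hni]
        simp only [hvv, zMat, Matrix.of_apply, hni, Option.elim]
        rw [Pi.single_apply, if_neg (fun h : i ∈ Sr r ∧ fr r i = j => hiS h.1), sub_zero]
        exact if_congr (eq_comm : (j = i) ↔ (i = j)) rfl rfl
      · obtain ⟨e, heE, he1, hee⟩ := hmem r hr i hni
        have hiS : i ∈ Sr r := by simp [hSr, hni]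
        have hfri : fr r i = e.2 := by simp [hfr, her, hee]
        simp only [hvv, zMat, Matrix.of_apply, hee, Option.elim, Pi.sub_apply]
        rw [Pi.single_apply, Pi.single_apply]
        have hcnd : (i ∈ Sr r ∧ fr r i = j) ↔ e.2 = j := by
          rw [hfri]; exact and_iff_right hiS
        rw [if_congr hcnd rfl rfl, if_congr (eq_comm : (j = i) ↔ (i = j)) rfl rfl,
          if_congr (eq_comm : (j = e.2) ↔ (e.2 = j)) rfl rfl]
    have hffr : ∀ i ∈ Sr r, fr r i ≠ i := by
      intro i hiS
      have hni : ¬ (r i = none) := (Finset.mem_filter.mp hiS).2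
      obtain ⟨e, heE, he1, hee⟩ := hmem r hr i hni
      have hfri : fr r i = e.2 := by simp [hfr, her, hee]
      rw [hfri, ← he1]
      exact (hE e heE).symm
    have hdetv : Matrix.detRowAlternating (Matrix.of fun i => vv i (r i))
        = (if NC r then (1 : Polynomial R) else 0) := by
      have h0 : Matrix.detRowAlternating (Matrix.of fun i => vv i (r i))
          = (Matrix.of fun i => vv i (r i)).det := rfl
      rw [h0, hz, det_zMat (Sr r) (fr r) hffr]
      congr 1
    -- scalar product computation
    have hcard : (Finset.univ.filter (fun i => r i = none)).card = n - (Sr r).card := by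
      have hadd := Finset.card_filter_add_card_filter_not
        (s := (Finset.univ : Finset (Fin n))) (p := fun i => r i = none)
      have hle : (Sr r).card ≤ n := le_trans (Finset.card_filter_le _ _) (by simp)
      have hSreq : (Finset.univ.filter (fun i => ¬ r i = none)).card = (Sr r).card := by
        rw [hSr]
      rw [Finset.card_univ, Fintype.card_fin] at hadd
      omega
    have hprod : (∏ i, cc i (r i))
        = Polynomial.C ((-1 : R) ^ (Sr r).card * ∏ x ∈ Sr r, w (er r x))
          * Polynomial.X ^ (n - (Sr r).card) := by
      rw [← Finset.prod_filter_mul_prod_filter_not Finset.univ (fun i => r i = none)]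
      have hXs : ∏ i ∈ Finset.univ.filter (fun i => r i = none), cc i (r i)
          = Polynomial.X ^ (n - (Sr r).card) := by
        rw [Finset.prod_congr rfl (fun i hi => ?_), Finset.prod_const, hcard]
        rw [(Finset.mem_filter.mp hi).2]
        rfl
      have hCs : ∏ i ∈ Finset.univ.filter (fun i => ¬ r i = none), cc i (r i)
          = Polynomial.C ((-1 : R) ^ (Sr r).card * ∏ x ∈ Sr r, w (er r x)) := by
        have hSreq : Finset.univ.filter (fun i => ¬ r i = none) = Sr r := by rw [hSr]
        rw [hSreq]
        have hstep1 : ∀ i ∈ Sr r, cc i (r i) = (-1 : Polynomial R) * Polynomial.C (w (er r i)) := by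
          intro i hiS
          obtain ⟨e, heE, he1, hee⟩ := hmem r hr i (Finset.mem_filter.mp hiS).2
          have heri : er r i = e := by simp [her, hee]
          rw [hee, heri]
          show -Polynomial.C (w e) = _
          ring
        rw [Finset.prod_congr rfl hstep1, Finset.prod_mul_distrib, Finset.prod_const,
          map_mul, map_pow, map_neg, map_one, map_prod]
      rw [hXs, hCs]
      ring
    rw [hsmul, hdetv, hprod, smul_eq_mul]
    by_cases hnc : NC r
    · rw [if_pos hnc, if_pos hnc, mul_one]
    · rw [if_neg hnc, if_neg hnc, mul_zero, map_zero, zero_mul]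
  -- coefficient extraction
  have hcoeff : ∀ i : ℕ, i < n → L.charpoly.coeff i
      = ∑ r ∈ (Fintype.piFinset Ai).filter (fun r => (Sr r).card = n - i ∧ NC r),
          ((-1 : R) ^ (Sr r).card * ∏ x ∈ Sr r, w (er r x)) := by
    intro i hi
    rw [hdet0, Polynomial.finset_sum_coeff,
      Finset.sum_congr rfl (fun r hr => by rw [hterm r hr])]
    have hval : ∀ r ∈ Fintype.piFinset Ai,
        (Polynomial.C (if NC r then (-1 : R) ^ (Sr r).card * ∏ x ∈ Sr r, w (er r x) else 0)
          * Polynomial.X ^ (n - (Sr r).card)).coeff i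
        = if (Sr r).card = n - i ∧ NC r
            then (-1 : R) ^ (Sr r).card * ∏ x ∈ Sr r, w (er r x) else 0 := by
      intro r _
      rw [Polynomial.coeff_C_mul, Polynomial.coeff_X_pow]
      have hk : (Sr r).card ≤ n := le_trans (Finset.card_filter_le _ _) (by simp)
      by_cases h1 : (Sr r).card = n - i
      · rw [if_pos (by omega : i = n - (Sr r).card), mul_one]
        by_cases h2 : NC r
        · rw [if_pos h2, if_pos ⟨h1, h2⟩]
        · rw [if_neg h2, if_neg (fun h => h2 h.2)]
      · rw [if_neg (by omega : ¬ i = n - (Sr r).card), mul_zero, if_neg (fun h => h1 h.1)]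
    rw [Finset.sum_congr rfl hval]
    exact (Finset.sum_filter _ _).symm
  -- facts about the forest associated to r
  have hFr : ∀ r ∈ Fintype.piFinset Ai, ∀ e ∈ E.filter (fun e => r e.1 = some e),
      e.1 ∈ Sr r ∧ er r e.1 = e := by
    intro r hr e he
    obtain ⟨heE, hsome⟩ := Finset.mem_filter.mp he
    have h1 : ¬ (r e.1 = none) := by rw [hsome]; simp
    refine ⟨by simp [hSr, h1], ?_⟩
    simp [her, hsome]
  have hFr2 : ∀ r ∈ Fintype.piFinset Ai, ∀ i ∈ Sr r,
      (i, fr r i) ∈ E.filter (fun e => r e.1 = some e) := by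
    intro r hr i hiS
    obtain ⟨e, heE, he1, hee⟩ := hmem r hr i (Finset.mem_filter.mp hiS).2
    have herie : er r i = e := by simp [her, hee]
    have hpair : (i, fr r i) = e := by
      show (i, (er r i).2) = e
      rw [herie, ← he1]
    rw [hpair]
    exact Finset.mem_filter.mpr ⟨heE, by rw [he1, hee]⟩
  have hSrIm : ∀ r ∈ Fintype.piFinset Ai,
      (E.filter (fun e => r e.1 = some e)).image Prod.fst = Sr r := by
    intro r hr
    apply Finset.Subset.antisymm
    · intro i hi
      obtain ⟨e, he, rfl⟩ := Finset.mem_image.mp hi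
      exact (hFr r hr e he).1
    · intro i hiS
      exact Finset.mem_image.mpr ⟨(i, fr r i), hFr2 r hr i hiS, rfl⟩
  have hinjfst : ∀ r ∈ Fintype.piFinset Ai, ∀ e ∈ E.filter (fun e => r e.1 = some e),
      ∀ e' ∈ E.filter (fun e => r e.1 = some e), e.1 = e'.1 → e = e' := by
    intro r _ e he e' he' h
    have h1 := (Finset.mem_filter.mp he).2
    have h2 := (Finset.mem_filter.mp he').2
    rw [h] at h1
    rw [h1] at h2
    exact Option.some_injective _ h2
  have hcardF : ∀ r ∈ Fintype.piFinset Ai,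
      (E.filter (fun e => r e.1 = some e)).card = (Sr r).card := by
    intro r hr
    rw [← hSrIm r hr]
    exact (Finset.card_image_of_injOn
      (fun e he e' he' h => hinjfst r hr e he e' he' h)).symm
  have hprodF : ∀ r ∈ Fintype.piFinset Ai,
      ∏ x ∈ Sr r, w (er r x) = ∏ e ∈ E.filter (fun e => r e.1 = some e), w e := by
    intro r hr
    rw [← hSrIm r hr, Finset.prod_image (fun e he e' he' h => hinjfst r hr e he e' he' h)]
    exact Finset.prod_congr rfl (fun e he => by rw [(hFr r hr e he).2])
  have hNCiff : ∀ r ∈ Fintype.piFinset Ai,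
      (NC r ↔ IsIncomingForest (E.filter (fun e => r e.1 = some e))) := by
    intro r hr
    refine noCyc_iff_forest _ (Sr r) (fr r) ?_ (hFr2 r hr)
    intro e he
    refine ⟨(hFr r hr e he).1, ?_, hE e (Finset.mem_filter.mp he).1⟩
    show (er r e.1).2 = e.2
    rw [(hFr r hr e he).2]
  -- the bijection
  have hbij : ∀ k : ℕ,
      ∑ r ∈ (Fintype.piFinset Ai).filter (fun r => (Sr r).card = k ∧ NC r),
        ∏ x ∈ Sr r, w (er r x) = forestSum E w k := by
    intro k
    rw [forestSum]
    refine Finset.sum_bij' (fun r _ => E.filter (fun e => r e.1 = some e))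
      (fun F _ => fun i => if h : ∃ e ∈ F, e.1 = i then some h.choose else none)
      ?_ ?_ ?_ ?_ ?_
    · -- maps to
      intro r hr
      obtain ⟨hrpi, hcard, hnc⟩ : r ∈ Fintype.piFinset Ai ∧ (Sr r).card = k ∧ NC r := by
        have := Finset.mem_filter.mp hr
        exact ⟨this.1, this.2.1, this.2.2⟩
      refine Finset.mem_filter.mpr ⟨Finset.mem_powerset.mpr (Finset.filter_subset _ _), ?_, ?_⟩
      · rw [hcardF r hrpi, hcard]
      · exact (hNCiff r hrpi).mp hnc
    · -- maps back
      intro F hF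
      obtain ⟨hFE, hFcard, hFforest⟩ : F ⊆ E ∧ F.card = k ∧ IsIncomingForest F := by
        have := Finset.mem_filter.mp hF
        exact ⟨Finset.mem_powerset.mp this.1, this.2.1, this.2.2⟩
      have hpsi : (fun i => if h : ∃ e ∈ F, e.1 = i then some h.choose else none)
          ∈ Fintype.piFinset Ai := by
        rw [Fintype.mem_piFinset]
        intro i
        by_cases h : ∃ e ∈ F, e.1 = i
        · rw [dif_pos h]
          refine Finset.mem_insert.mpr (Or.inr (Finset.mem_image.mpr ⟨h.choose, ?_, rfl⟩))
          exact Finset.mem_filter.mpr ⟨hFE h.choose_spec.1, h.choose_spec.2⟩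
        · rw [dif_neg h]
          exact Finset.mem_insert_self _ _
      have hPhiPsi : E.filter (fun e =>
          (if h : ∃ e' ∈ F, e'.1 = e.1 then some h.choose else none) = some e) = F := by
        ext e
        rw [Finset.mem_filter]
        constructor
        · rintro ⟨heE, hsome⟩
          by_cases h : ∃ e' ∈ F, e'.1 = e.1
          · rw [dif_pos h] at hsome
            have := Option.some_injective _ hsome
            rw [← this]
            exact h.choose_spec.1
          · rw [dif_neg h] at hsome
            exact absurd hsome (by simp)
        · intro heF
          have h : ∃ e' ∈ F, e'.1 = e.1 := ⟨e, heF, rfl⟩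
          refine ⟨hFE heF, ?_⟩
          rw [dif_pos h]
          congr 1
          exact hFforest.2.2.2 h.choose h.choose_spec.1 e heF h.choose_spec.2
      refine Finset.mem_filter.mpr ⟨hpsi, ?_, ?_⟩
      · rw [← hcardF _ hpsi, hPhiPsi, hFcard]
      · exact (hNCiff _ hpsi).mpr (by rw [hPhiPsi]; exact hFforest)
    · -- left inverse
      intro r hr
      have hrpi : r ∈ Fintype.piFinset Ai := (Finset.mem_filter.mp hr).1
      funext i
      show (if h : ∃ e ∈ E.filter (fun e => r e.1 = some e), e.1 = i
        then some h.choose else none) = r i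
      by_cases hni : r i = none
      · rw [dif_neg, hni]
        rintro ⟨e, he, rfl⟩
        have := (Finset.mem_filter.mp he).2
        rw [hni] at this
        exact absurd this (by simp)
      · obtain ⟨e, heE, he1, hee⟩ := hmem r hrpi i hni
        have heF : e ∈ E.filter (fun e => r e.1 = some e) :=
          Finset.mem_filter.mpr ⟨heE, by rw [he1, hee]⟩
        have h : ∃ e' ∈ E.filter (fun e => r e.1 = some e), e'.1 = i := ⟨e, heF, he1⟩
        rw [dif_pos h, hee]
        congr 1
        exact hinjfst r hrpi h.choose h.choose_spec.1 e heF (by rw [h.choose_spec.2, he1])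
    · -- right inverse
      intro F hF
      have hFE : F ⊆ E := Finset.mem_powerset.mp (Finset.mem_filter.mp hF).1
      have hFforest : IsIncomingForest F := (Finset.mem_filter.mp hF).2.2
      show E.filter (fun e =>
          (if h : ∃ e' ∈ F, e'.1 = e.1 then some h.choose else none) = some e) = F
      ext e
      rw [Finset.mem_filter]
      constructor
      · rintro ⟨heE, hsome⟩
        by_cases h : ∃ e' ∈ F, e'.1 = e.1
        · rw [dif_pos h] at hsome
          have := Option.some_injective _ hsome
          rw [← this]
          exact h.choose_spec.1
        · rw [dif_neg h] at hsome
          exact absurd hsome (by simp)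
      · intro heF
        have h : ∃ e' ∈ F, e'.1 = e.1 := ⟨e, heF, rfl⟩
        refine ⟨hFE heF, ?_⟩
        rw [dif_pos h]
        congr 1
        exact hFforest.2.2.2 h.choose h.choose_spec.1 e heF h.choose_spec.2
    · -- values agree
      intro r hr
      exact hprodF r (Finset.mem_filter.mp hr).1
  -- main statement
  have hmain : ∀ i < n, L.charpoly.coeff i = (-1 : R) ^ (n - i) * forestSum E w (n - i) := by
    intro i hi
    rw [hcoeff i hi,
      Finset.sum_congr rfl (fun r hr => by rw [(Finset.mem_filter.mp hr).2.1]),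
      ← Finset.mul_sum, hbij (n - i)]
  refine ⟨hmain, ?_⟩
  intro hn
  rw [hmain 0 hn]
  have hzero : forestSum E w (n - 0) = 0 := by
    rw [Nat.sub_zero, forestSum]
    convert Finset.sum_empty
    rw [Finset.eq_empty_iff_forall_notMem]
    intro F hF
    obtain ⟨hFE, hFcard, hFforest⟩ : F ⊆ E ∧ F.card = n ∧ IsIncomingForest F := by
      have := Finset.mem_filter.mp hF
      exact ⟨Finset.mem_powerset.mp this.1, this.2.1, this.2.2⟩
    set S : Finset (Fin n) := F.image Prod.fst with hSdef
    set f : Fin n → Fin n :=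
      fun i => if h : ∃ e ∈ F, e.1 = i then h.choose.2 else i with hfdef
    have h1 : ∀ e ∈ F, e.1 ∈ S ∧ f e.1 = e.2 ∧ e.1 ≠ e.2 := by
      intro e he
      refine ⟨Finset.mem_image.mpr ⟨e, he, rfl⟩, ?_, hFforest.1 e he⟩
      have hex : ∃ e' ∈ F, e'.1 = e.1 := ⟨e, he, rfl⟩
      show (if h : ∃ e' ∈ F, e'.1 = e.1 then h.choose.2 else e.1) = e.2
      rw [dif_pos hex]
      congr 1
      exact hFforest.2.2.2 hex.choose hex.choose_spec.1 e he hex.choose_spec.2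
    have h2 : ∀ i ∈ S, (i, f i) ∈ F := by
      intro i hiS
      obtain ⟨e, he, rfl⟩ := Finset.mem_image.mp hiS
      have : (e.1, f e.1) = e := by
        rw [(h1 e he).2.1]
      rw [this]
      exact he
    have hNCS := (noCyc_iff_forest F S f h1 h2).mpr hFforest
    have hScard : S.card = n := by
      rw [hSdef, Finset.card_image_of_injOn
        (fun e he e' he' h => hFforest.2.2.2 e he e' he' h), hFcard]
    have hSuniv : S = Finset.univ :=
      Finset.eq_univ_of_card S (by rw [hScard, Fintype.card_fin])
    have huniv_ne : (Finset.univ : Finset (Fin n)).Nonempty := ⟨⟨0, hn⟩, Finset.mem_univ _⟩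
    obtain ⟨t, _, hft⟩ := hNCS Finset.univ (by rw [hSuniv]) huniv_ne
    exact hft (Finset.mem_univ _)
  rw [hzero, mul_zero]
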